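/- Let G be a group, X a Hausdorff locally compact paracompact space and φ : G ↷ X a properly discontinuous and cocompact action by homeomorphisms. Then A = {Sat(U₁) ∘ … ∘ Sat(Uₙ) : n ≥ 1, U₁, …, Uₙ topologically bounded subsets of X} is a basis for the coarse structure ε_φ; that is, A satisfies: some member of A contains the diagonal ΔX; any two members of A are contained in a common member of A; A is closed under inverses and compositions; and every e ∈ ε_φ is contained in some member of A. -/

import Mathlib

namespace Paper

open Set Topology

/-! ### Coarse structures -/

/-- The inverse of a relation `e ⊆ X × X`. -/
def invRel {X : Type*} (e : Set (X × X)) : Set (X × X) := {p | (p.2, p.1) ∈ e}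

/-- The composition of relations: `compRel e e' = {(a,b) | ∃ c, (a,c) ∈ e ∧ (c,b) ∈ e'}`.
This is `e' ∘ e` in the paper's notation. -/
def compRel {X : Type*} (e e' : Set (X × X)) : Set (X × X) :=
  {p | ∃ c, (p.1, c) ∈ e ∧ (c, p.2) ∈ e'}

/-- A coarse structure on a set `X`. -/
def IsCoarseStructure {X : Type*} (ε : Set (Set (X × X))) : Prop :=
  Set.diagonal X ∈ ε ∧
  (∀ e ∈ ε, ∀ e' : Set (X × X), e' ⊆ e → e' ∈ ε) ∧
  (∀ e ∈ ε, ∀ e' ∈ ε, e ∪ e' ∈ ε) ∧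
  (∀ e ∈ ε, invRel e ∈ ε) ∧
  (∀ e ∈ ε, ∀ e' ∈ ε, compRel e e' ∈ ε)

/-- The coarse structure generated by a family `A` of subsets of `X × X`:
the intersection of all coarse structures containing `A`. -/
def genCoarse {X : Type*} (A : Set (Set (X × X))) : Set (Set (X × X)) :=
  ⋂₀ {ε | IsCoarseStructure ε ∧ A ⊆ ε}

/-- The `u`-neighbourhood `𝔅(B, u)` of a subset `B`. -/
def Bnh {X : Type*} (B : Set X) (u : Set (X × X)) : Set X := {x | ∃ y ∈ B, (x, y) ∈ u}

/-- A subset `B` is bounded for the coarse structure `ε` if `B × B ∈ ε`. -/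
def CBounded {X : Type*} (ε : Set (Set (X × X))) (B : Set X) : Prop := B ×ˢ B ∈ ε

/-- A map is bornologous if it sends entourages to entourages. -/
def Bornologous {X Y : Type*} (ε : Set (Set (X × X))) (ζ : Set (Set (Y × Y)))
    (f : X → Y) : Prop :=
  ∀ e ∈ ε, Prod.map f f '' e ∈ ζ

/-- A map is (coarsely) proper if preimages of bounded sets are bounded. -/
def CProper {X Y : Type*} (ε : Set (Set (X × X))) (ζ : Set (Set (Y × Y)))
    (f : X → Y) : Prop :=
  ∀ B : Set Y, CBounded ζ B → CBounded ε (f ⁻¹' B)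

/-- A coarse map is a proper bornologous map. -/
def CoarseMap {X Y : Type*} (ε : Set (Set (X × X))) (ζ : Set (Set (Y × Y)))
    (f : X → Y) : Prop :=
  Bornologous ε ζ f ∧ CProper ε ζ f

/-- Two maps `f g : S → X` are close if `{(f s, g s) | s ∈ S}` is an entourage. -/
def Close {S X : Type*} (ε : Set (Set (X × X))) (f g : S → X) : Prop :=
  Set.range (fun s => (f s, g s)) ∈ ε

/-- A coarse equivalence: a coarse map with a coarse quasi-inverse. -/
def CoarseEquiv {X Y : Type*} (ε : Set (Set (X × X))) (ζ : Set (Set (Y × Y)))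
    (f : X → Y) : Prop :=
  CoarseMap ε ζ f ∧
    ∃ g : Y → X, CoarseMap ζ ε g ∧ Close ζ (f ∘ g) id ∧ Close ε (g ∘ f) id

/-- The subspace coarse structure on `A ⊆ Y`. -/
def SubCoarse {Y : Type*} (ζ : Set (Set (Y × Y))) (A : Set Y) : Set (Set (↥A × ↥A)) :=
  {e | Prod.map (Subtype.val : A → Y) (Subtype.val : A → Y) '' e ∈ ζ}

/-- A coarse embedding: a coarse map which is a coarse equivalence onto its image with
the subspace coarse structure. -/
def CoarseEmbedding {X Y : Type*} (ε : Set (Set (X × X))) (ζ : Set (Set (Y × Y)))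
    (f : X → Y) : Prop :=
  CoarseMap ε ζ f ∧ CoarseEquiv ε (SubCoarse ζ (Set.range f)) (Set.rangeFactorization f)

/-- A coarse space is coarsely connected if every pair lies in some entourage. -/
def CoarselyConnected {X : Type*} (ε : Set (Set (X × X))) : Prop :=
  ∀ x y : X, ∃ e ∈ ε, (x, y) ∈ e

/-- `A` is quasi-dense if `𝔅(A, e) = X` for some entourage `e`. -/
def QuasiDense {X : Type*} (ε : Set (Set (X × X))) (A : Set X) : Prop :=
  ∃ e ∈ ε, Bnh A e = Set.univ

/-- A subset of a topological space is topologically bounded if its closure is compact. -/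
def TopBounded {X : Type*} [TopologicalSpace X] (B : Set X) : Prop := IsCompact (closure B)

/-- A coarse structure on a topological space is proper if it contains a neighbourhood of
the diagonal and every bounded set is topologically bounded. -/
def ProperCoarse {X : Type*} [TopologicalSpace X] (ε : Set (Set (X × X))) : Prop :=
  (∃ e ∈ ε, e ∈ nhdsSet (Set.diagonal X)) ∧ ∀ B : Set X, CBounded ε B → TopBounded B

/-! ### Artin–Wraith glueings -/

/-- An admissible map `f : Closed(X) → Closed(Y)`. -/
def Admissible {X Y : Type*} [TopologicalSpace X] [TopologicalSpace Y]
    (f : Set X → Set Y) : Prop :=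
  (∀ A : Set X, IsClosed A → IsClosed (f A)) ∧
  (∀ A B : Set X, IsClosed A → IsClosed B → f (A ∪ B) = f A ∪ f B) ∧
  f ∅ = ∅

/-- The closed sets of the Artin–Wraith glueing `X +_f Y`. -/
def AWClosed {X Y : Type*} [TopologicalSpace X] [TopologicalSpace Y]
    (f : Set X → Set Y) : Set (Set (X ⊕ Y)) :=
  {A | IsClosed (Sum.inl ⁻¹' A) ∧ IsClosed (Sum.inr ⁻¹' A) ∧
    Sum.inr '' f (Sum.inl ⁻¹' A) ⊆ A}

/-- The topology of the Artin–Wraith glueing `X +_f Y` on `X ⊕ Y`. (For admissible `f`,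
the closed sets of this topology are exactly the members of `AWClosed f`.) -/
def AWTop {X Y : Type*} [TopologicalSpace X] [TopologicalSpace Y]
    (f : Set X → Set Y) : TopologicalSpace (X ⊕ Y) :=
  TopologicalSpace.generateFrom (compl '' AWClosed f)

/-- `X +_f W` is a (Hausdorff) compactification of `X`: a compact Hausdorff Artin–Wraith
glueing in which `X` is dense. -/
def IsCompactification {X W : Type*} [TopologicalSpace X] [TopologicalSpace W]
    (f : Set X → Set W) : Prop :=
  Admissible f ∧
  @CompactSpace (X ⊕ W) (AWTop f) ∧
  @T2Space (X ⊕ W) (AWTop f) ∧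
  @Dense (X ⊕ W) (AWTop f) (Set.range Sum.inl)

/-- A relation `e ⊆ X × X` is proper if `𝔅(B,e)` and `𝔅(B,e⁻¹)` are topologically
bounded for every topologically bounded `B`. -/
def ProperRel {X : Type*} [TopologicalSpace X] (e : Set (X × X)) : Prop :=
  ∀ B : Set X, TopBounded B → TopBounded (Bnh B e) ∧ TopBounded (Bnh B (invRel e))

/-- `e` is a perspective subset of `X × X` with respect to the compactification `X +_f W`. -/
def PerspRel {X W : Type*} [TopologicalSpace X] [TopologicalSpace W]
    (f : Set X → Set W) (e : Set (X × X)) : Prop :=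
  ProperRel e ∧
  ∀ y : W, ∀ V : Set (X ⊕ W), IsOpen[AWTop f] V → Sum.inr y ∈ V →
    ∃ U : Set (X ⊕ W), IsOpen[AWTop f] U ∧ Sum.inr y ∈ U ∧ U ⊆ V ∧
      ∀ p ∈ e, Sum.inl p.1 ∈ U → Sum.inl p.2 ∈ V

/-- A perspective compactification of the coarse space `(X, ε)`. -/
def PerspCompactification {X W : Type*} [TopologicalSpace X] [TopologicalSpace W]
    (ε : Set (Set (X × X))) (f : Set X → Set W) : Prop :=
  IsCompactification f ∧ ∀ e ∈ ε, PerspRel f e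

/-- The pullback of `f : Closed(X) → Closed(W)` with respect to `π : Y → X` and
`ϖ : Z → W`. -/
def pullbackAW {X Y Z W : Type*} [TopologicalSpace X] [TopologicalSpace Z]
    (f : Set X → Set W) (π : Y → X) (ϖ : Z → W) (A : Set Y) : Set Z :=
  closure (ϖ ⁻¹' (f (closure (π '' A))))

/-! ### Group actions -/

/-- `φ : G → X → X` is an action by homeomorphisms. -/
def IsActionByHomeos {G X : Type*} [Group G] [TopologicalSpace X]
    (φ : G → X → X) : Prop :=
  (∀ g : G, Continuous (φ g)) ∧ (∀ x : X, φ 1 x = x) ∧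
    ∀ g h : G, ∀ x : X, φ (g * h) x = φ g (φ h x)

/-- A properly discontinuous action. -/
def ProperlyDisc {G X : Type*} [TopologicalSpace X] (φ : G → X → X) : Prop :=
  ∀ K : Set X, IsCompact K → {g : G | (φ g '' K ∩ K).Nonempty}.Finite

/-- A cocompact action. -/
def CocompactAct {G X : Type*} [TopologicalSpace X] (φ : G → X → X) : Prop :=
  ∃ K : Set X, IsCompact K ∧ (⋃ g : G, φ g '' K) = Set.univ

/-- The saturation `Sat(A) = {(φ(g,x), φ(g,x')) : g ∈ G, x, x' ∈ A}`. -/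
def Sat {G X : Type*} (φ : G → X → X) (A : Set X) : Set (X × X) :=
  {p | ∃ g : G, ∃ x ∈ A, ∃ x' ∈ A, p = (φ g x, φ g x')}

/-- The coarse structure `ε_φ` on `X` generated by the saturations of topologically
bounded sets. -/
def coarseOfAction {G X : Type*} [TopologicalSpace X] (φ : G → X → X) :
    Set (Set (X × X)) :=
  genCoarse {e | ∃ A : Set X, TopBounded A ∧ e = Sat φ A}

/-- The saturation for the left multiplication action of a group on itself. -/
def SatMul {G : Type*} [Group G] (U : Set G) : Set (G × G) :=
  {p | ∃ g : G, ∃ u ∈ U, ∃ u' ∈ U, p = (g * u, g * u')}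

/-- The coarse structure `ε_G` on the group `G`, generated by the saturations of
finite subsets under the left multiplication action. -/
def coarseGroup (G : Type*) [Group G] : Set (Set (G × G)) :=
  genCoarse {e | ∃ U : Set G, U.Finite ∧ e = SatMul U}

/-- The compactification `X +_f W` is group-theoretically perspective with respect to the
action `φ`. -/
def GTPerspective {G X W : Type*} [TopologicalSpace X] [TopologicalSpace W]
    (φ : G → X → X) (f : Set X → Set W) : Prop :=
  ∀ K : Set X, IsCompact K → ∀ y : W, ∀ U : Set (X ⊕ W),
    IsOpen[AWTop f] U → Sum.inr y ∈ U →
      ∃ V : Set (X ⊕ W), IsOpen[AWTop f] V ∧ Sum.inr y ∈ V ∧ V ⊆ U ∧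
        ∀ g : G, (∃ x ∈ K, Sum.inl (φ g x) ∈ V) → ∀ x ∈ K, Sum.inl (φ g x) ∈ U

/-! ### Rays and accessibility -/

/-- A family `Ψ` of rays in `X` based at `p`: each member is a pair `(A, γ)` of a closed
unbounded subset `A ⊆ [0,∞)` containing `0` and a map `γ : ℝ → X` (regarded on `A`) which
is injective on `A`, proper, and satisfies `γ 0 = p`. -/
def GoodRayFamily {X : Type*} [TopologicalSpace X] (p : X)
    (Ψ : Set (Set ℝ × (ℝ → X))) : Prop :=
  ∀ r ∈ Ψ, r.1 ⊆ Set.Ici (0 : ℝ) ∧ IsClosed r.1 ∧ ¬Bornology.IsBounded r.1 ∧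
    (0 : ℝ) ∈ r.1 ∧ r.2 0 = p ∧ Set.InjOn r.2 r.1 ∧
    ∀ B : Set X, TopBounded B → Bornology.IsBounded (r.1 ∩ r.2 ⁻¹' B)

/-- The compactification `X +_f W` is `Ψ`-accessible. -/
def AccessibleComp {X W : Type*} [TopologicalSpace X] [TopologicalSpace W]
    (f : Set X → Set W) (Ψ : Set (Set ℝ × (ℝ → X))) : Prop :=
  (∀ w : W, ∃ r ∈ Ψ, f (closure (r.2 '' r.1)) = {w}) ∧
  ∀ r ∈ Ψ, ∃ w : W, f (closure (r.2 '' r.1)) = {w}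


/-- The composition `e₁ ∘ e₂ ∘ … ∘ eₙ` of a list of relations (the empty composition
being the diagonal, which is neutral for `compRel`). -/
def listComp {X : Type*} (l : List (Set (X × X))) : Set (X × X) :=
  l.foldr compRel (Set.diagonal X)

/-- The family `A = {Sat(U₁) ∘ … ∘ Sat(Uₙ) : n ≥ 1, Uᵢ topologically bounded}`. -/
def SatBasis {G X : Type*} [TopologicalSpace X] (φ : G → X → X) : Set (Set (X × X)) :=
  {e | ∃ l : List (Set X), l ≠ [] ∧ (∀ U ∈ l, TopBounded U) ∧
    e = listComp (l.map (Sat φ))}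

section Aux

variable {X : Type*}

lemma compRel_diag_right (e : Set (X × X)) : compRel e (Set.diagonal X) = e := by
  ext p; constructor
  · rintro ⟨c, h1, h2⟩; cases h2; exact h1
  · intro h; exact ⟨p.2, h, rfl⟩

lemma compRel_diag_left (e : Set (X × X)) : compRel (Set.diagonal X) e = e := by
  ext p; constructor
  · rintro ⟨c, h1, h2⟩; cases h1; exact h2
  · intro h; exact ⟨p.1, rfl, h⟩

lemma compRel_assoc (a b c : Set (X × X)) :
    compRel (compRel a b) c = compRel a (compRel b c) := by
  ext p; constructor
  · rintro ⟨d, ⟨e, h1, h2⟩, h3⟩; exact ⟨e, h1, d, h2, h3⟩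
  · rintro ⟨d, h1, e, h2, h3⟩; exact ⟨e, ⟨d, h1, h2⟩, h3⟩

lemma compRel_mono {a b a' b' : Set (X × X)} (ha : a ⊆ a') (hb : b ⊆ b') :
    compRel a b ⊆ compRel a' b' := by
  rintro p ⟨c, h1, h2⟩; exact ⟨c, ha h1, hb h2⟩

lemma listComp_cons (a : Set (X × X)) (l : List (Set (X × X))) :
    listComp (a :: l) = compRel a (listComp l) := rfl

lemma listComp_append (l l' : List (Set (X × X))) :
    listComp (l ++ l') = compRel (listComp l) (listComp l') := by
  induction l with
  | nil => simp [listComp, compRel_diag_left]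
  | cons a t ih =>
      simp only [List.cons_append, listComp_cons, ih, compRel_assoc]

lemma invRel_compRel (a b : Set (X × X)) :
    invRel (compRel a b) = compRel (invRel b) (invRel a) := by
  ext p; constructor
  · rintro ⟨c, h1, h2⟩; exact ⟨c, h2, h1⟩
  · rintro ⟨c, h1, h2⟩; exact ⟨c, h2, h1⟩

lemma invRel_diag : invRel (Set.diagonal X) = Set.diagonal X := by
  ext p; exact ⟨fun h => h.symm, fun h => h.symm⟩

lemma invRel_listComp (l : List (Set (X × X))) :
    invRel (listComp l) = listComp (l.reverse.map invRel) := by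
  induction l with
  | nil => simp [listComp, invRel_diag]
  | cons a t ih =>
      rw [listComp_cons, invRel_compRel, ih]
      simp only [List.reverse_cons, List.map_append, listComp_append]
      simp [listComp, compRel_diag_right]

lemma diag_subset_listComp {l : List (Set (X × X))}
    (h : ∀ a ∈ l, Set.diagonal X ⊆ a) : Set.diagonal X ⊆ listComp l := by
  induction l with
  | nil => exact le_refl _
  | cons a t ih =>
      rintro ⟨x, y⟩ hxy; cases hxy
      exact ⟨x, h a List.mem_cons_self rfl,
        ih (fun b hb => h b (List.mem_cons_of_mem a hb)) rfl⟩

lemma subset_compRel_left {a b : Set (X × X)} (h : Set.diagonal X ⊆ b) :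
    a ⊆ compRel a b := fun p hp => ⟨p.2, hp, h rfl⟩

lemma subset_compRel_right {a b : Set (X × X)} (h : Set.diagonal X ⊆ a) :
    b ⊆ compRel a b := fun p hp => ⟨p.1, h rfl, hp⟩

lemma listComp_map_mono {α : Type*} {f g : α → Set (X × X)} {l : List α}
    (h : ∀ U ∈ l, f U ⊆ g U) : listComp (l.map f) ⊆ listComp (l.map g) := by
  induction l with
  | nil => exact le_refl _
  | cons a t ih =>
      simp only [List.map_cons, listComp_cons]
      exact compRel_mono (h a List.mem_cons_self)
        (ih fun b hb => h b (List.mem_cons_of_mem a hb))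

lemma sat_mono {G : Type*} (φ : G → X → X) {A B : Set X} (h : A ⊆ B) :
    Sat φ A ⊆ Sat φ B := by
  rintro p ⟨g, x, hx, x', hx', rfl⟩
  exact ⟨g, x, h hx, x', h hx', rfl⟩

lemma invRel_sat {G : Type*} (φ : G → X → X) (A : Set X) :
    invRel (Sat φ A) = Sat φ A := by
  ext p; constructor
  · rintro ⟨g, x, hx, x', hx', hp⟩
    exact ⟨g, x', hx', x, hx, by
      rw [Prod.ext_iff] at hp ⊢; exact ⟨hp.2, hp.1⟩⟩
  · rintro ⟨g, x, hx, x', hx', hp⟩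
    exact ⟨g, x', hx', x, hx, by
      rw [Prod.ext_iff] at hp ⊢; exact ⟨hp.2, hp.1⟩⟩

lemma topBounded_union [TopologicalSpace X] {A B : Set X}
    (hA : TopBounded A) (hB : TopBounded B) : TopBounded (A ∪ B) := by
  unfold TopBounded at *
  rw [closure_union]
  exact hA.union hB

end Aux

/-- `SatBasis φ` is a basis for the coarse structure `ε_φ`. -/
theorem stmt6 {G X : Type*} [Group G] [TopologicalSpace X] [T2Space X]
    [LocallyCompactSpace X] [ParacompactSpace X]
    (φ : G → X → X) (hact : IsActionByHomeos φ) (hpd : ProperlyDisc φ)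
    (hcc : CocompactAct φ) :
    (∃ e ∈ SatBasis φ, Set.diagonal X ⊆ e) ∧
    (∀ e ∈ SatBasis φ, ∀ e' ∈ SatBasis φ, ∃ e'' ∈ SatBasis φ, e ∪ e' ⊆ e'') ∧
    (∀ e ∈ SatBasis φ, invRel e ∈ SatBasis φ) ∧
    (∀ e ∈ SatBasis φ, ∀ e' ∈ SatBasis φ, compRel e e' ∈ SatBasis φ) ∧
    (∀ e ∈ coarseOfAction φ, ∃ e' ∈ SatBasis φ, e ⊆ e') := by
  obtain ⟨K, hKc, hKu⟩ := hcc
  have hKb : TopBounded K := by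
    unfold TopBounded; rw [hKc.isClosed.closure_eq]; exact hKc
  have hdiagK : Set.diagonal X ⊆ Sat φ K := by
    rintro ⟨x, y⟩ hxy; cases hxy
    have : x ∈ ⋃ g : G, φ g '' K := hKu ▸ Set.mem_univ x
    obtain ⟨_, ⟨g, rfl⟩, k, hk, rfl⟩ := this
    exact ⟨g, k, hk, k, hk, rfl⟩
  -- a member of SatBasis containing the diagonal
  have hdiag : ∃ e ∈ SatBasis φ, Set.diagonal X ⊆ e := by
    refine ⟨Sat φ K, ⟨[K], by simp, by simp [hKb], by
      simp [listComp, compRel_diag_right]⟩, hdiagK⟩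
  -- directedness
  have hunion : ∀ e ∈ SatBasis φ, ∀ e' ∈ SatBasis φ,
      ∃ e'' ∈ SatBasis φ, e ∪ e' ⊆ e'' := by
    rintro e ⟨l, hl, hlb, rfl⟩ e' ⟨l', hl', hlb', rfl⟩
    set L : List (Set X) := l.map (· ∪ K) ++ l'.map (· ∪ K) with hL
    refine ⟨listComp (L.map (Sat φ)), ⟨L, ?_, ?_, rfl⟩, ?_⟩
    · simp [hL, hl, hl']
    · intro U hU
      simp only [hL, List.mem_append, List.mem_map] at hU
      rcases hU with ⟨V, hV, rfl⟩ | ⟨V, hV, rfl⟩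
      · exact topBounded_union (hlb V hV) hKb
      · exact topBounded_union (hlb' V hV) hKb
    · have hdA : Set.diagonal X ⊆ listComp ((l.map (· ∪ K)).map (Sat φ)) := by
        apply diag_subset_listComp
        intro a ha
        simp only [List.mem_map] at ha
        obtain ⟨V, ⟨W, _, rfl⟩, rfl⟩ := ha
        exact hdiagK.trans (sat_mono φ (Set.subset_union_right))
      have hdB : Set.diagonal X ⊆ listComp ((l'.map (· ∪ K)).map (Sat φ)) := by
        apply diag_subset_listComp
        intro a ha
        simp only [List.mem_map] at ha
        obtain ⟨V, ⟨W, _, rfl⟩, rfl⟩ := ha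
        exact hdiagK.trans (sat_mono φ (Set.subset_union_right))
      have hsubA : listComp (l.map (Sat φ)) ⊆
          listComp ((l.map (· ∪ K)).map (Sat φ)) := by
        rw [List.map_map]
        exact listComp_map_mono fun U _ => sat_mono φ Set.subset_union_left
      have hsubB : listComp (l'.map (Sat φ)) ⊆
          listComp ((l'.map (· ∪ K)).map (Sat φ)) := by
        rw [List.map_map]
        exact listComp_map_mono fun U _ => sat_mono φ Set.subset_union_left
      rw [hL, List.map_append, listComp_append]
      exact Set.union_subset (hsubA.trans (subset_compRel_left hdB))
        (hsubB.trans (subset_compRel_right hdA))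
  -- inverses
  have hinv : ∀ e ∈ SatBasis φ, invRel e ∈ SatBasis φ := by
    rintro e ⟨l, hl, hlb, rfl⟩
    refine ⟨l.reverse, by simpa using hl, fun U hU => hlb U (by simpa using hU), ?_⟩
    rw [invRel_listComp, ← List.map_reverse, List.map_map]
    have h : List.map (invRel ∘ Sat φ) l.reverse = List.map (Sat φ) l.reverse :=
      List.map_congr_left fun U _ => invRel_sat φ U
    rw [h]
  -- compositions
  have hcomp : ∀ e ∈ SatBasis φ, ∀ e' ∈ SatBasis φ, compRel e e' ∈ SatBasis φ := by
    rintro e ⟨l, hl, hlb, rfl⟩ e' ⟨l', hl', hlb', rfl⟩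
    refine ⟨l ++ l', by simp [hl, hl'], ?_, ?_⟩
    · intro U hU
      rcases List.mem_append.mp hU with h | h
      · exact hlb U h
      · exact hlb' U h
    · rw [List.map_append, listComp_append]
  refine ⟨hdiag, hunion, hinv, hcomp, ?_⟩
  -- every entourage of ε_φ is contained in a member of SatBasis
  intro e he
  set P : Set (Set (X × X)) := {e | ∃ e' ∈ SatBasis φ, e ⊆ e'} with hP
  have hPcs : IsCoarseStructure P := by
    refine ⟨hdiag, ?_, ?_, ?_, ?_⟩
    · rintro a ⟨e', he', hsub⟩ b hb
      exact ⟨e', he', hb.trans hsub⟩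
    · rintro a ⟨ea, hea, ha⟩ b ⟨eb, heb, hb⟩
      obtain ⟨e'', he'', hsub⟩ := hunion ea hea eb heb
      exact ⟨e'', he'', Set.union_subset (ha.trans (Set.subset_union_left.trans hsub))
        (hb.trans (Set.subset_union_right.trans hsub))⟩
    · rintro a ⟨ea, hea, ha⟩
      exact ⟨invRel ea, hinv ea hea, fun p hp => ha hp⟩
    · rintro a ⟨ea, hea, ha⟩ b ⟨eb, heb, hb⟩
      exact ⟨compRel ea eb, hcomp ea hea eb heb, compRel_mono ha hb⟩
  have hgen : {e | ∃ A : Set X, TopBounded A ∧ e = Sat φ A} ⊆ P := by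
    rintro _ ⟨A, hA, rfl⟩
    exact ⟨Sat φ A, ⟨[A], by simp, by simp [hA], by
      simp [listComp, compRel_diag_right]⟩, le_refl _⟩
  exact he P ⟨hPcs, hgen⟩

end Paper
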